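/- For an integer k > 20 and γ ∈ (π/8, π/4), let σ_{k,γ} = √( cos(2γ) / cos(2(γ − π/k)) ). Let kₙ = 100·2ⁿ and γₙ = π/4 − π/√kₙ for n ≥ 1. Then: (i) 0 < σ_{kₙ,γₙ} < 1 for every n ≥ 1; (ii) 0 ≤ 1 − (σ_{kₙ,γₙ})² ≤ (π/2)·(1/√kₙ) for every n ≥ 1; and (iii) the infinite product ∏_{n=1}^∞ σ_{kₙ,γₙ} converges to a limit lying in the open interval (0, 1). -/

import Mathlib

open Real Filter

set_option maxHeartbeats 2000000

/-- `σ_{k,γ} = √( cos(2γ) / cos(2(γ − π/k)) )`. -/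
noncomputable def sigma' (k : ℕ) (γ : ℝ) : ℝ :=
  Real.sqrt (Real.cos (2 * γ) / Real.cos (2 * (γ - π / k)))

/-- `kₙ = 100·2ⁿ`. -/
def kseq (n : ℕ) : ℕ := 100 * 2 ^ n

/-- `γₙ = π/4 − π/√kₙ`. -/
noncomputable def gseq (n : ℕ) : ℝ := π / 4 - π / Real.sqrt (kseq n)

lemma key (n : ℕ) (hn : 1 ≤ n) :
    0 < sigma' (kseq n) (gseq n) ∧ sigma' (kseq n) (gseq n) < 1 ∧
    1 - (sigma' (kseq n) (gseq n)) ^ 2 ≤ (π / 2) * (1 / Real.sqrt (kseq n)) := by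
  have hk : (200:ℝ) ≤ (kseq n : ℝ) := by
    have h2 : (2:ℕ) ≤ 2 ^ n := by
      calc (2:ℕ) = 2 ^ 1 := rfl
        _ ≤ 2 ^ n := Nat.pow_le_pow_right (by norm_num) hn
    have : (200:ℕ) ≤ kseq n := by unfold kseq; omega
    exact_mod_cast this
  have hk0 : (0:ℝ) < (kseq n : ℝ) := by linarith
  set s : ℝ := Real.sqrt (kseq n) with hs_def
  have hs14 : (14:ℝ) ≤ s := by
    rw [hs_def, Real.le_sqrt (by norm_num) hk0.le]; nlinarith
  have hs0 : (0:ℝ) < s := by linarith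
  have hss : s ^ 2 = (kseq n : ℝ) := Real.sq_sqrt hk0.le
  have hpil : (3.14:ℝ) < π := Real.pi_gt_d2
  have hpiu : π < 3.15 := Real.pi_lt_d2
  set a : ℝ := 2 * π / s with ha_def
  set b : ℝ := 2 * π / (kseq n : ℝ) with hb_def
  have ha0 : 0 < a := by positivity
  have hb0 : 0 < b := by positivity
  have haU : a ≤ 0.45 := by
    rw [ha_def, div_le_iff₀ hs0]; nlinarith
  have hbU : b ≤ 0.0315 := by
    rw [hb_def, div_le_iff₀ hk0]; nlinarith
  have cos1 : Real.cos (2 * gseq n) = Real.sin a := by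
    have h : 2 * gseq n = π / 2 - a := by
      unfold gseq; rw [ha_def, ← hs_def]; ring
    rw [h, Real.cos_pi_div_two_sub]
  have cos2 : Real.cos (2 * (gseq n - π / (kseq n : ℝ))) = Real.sin (a + b) := by
    have h : 2 * (gseq n - π / (kseq n : ℝ)) = π / 2 - (a + b) := by
      unfold gseq; rw [ha_def, hb_def, ← hs_def]; ring
    rw [h, Real.cos_pi_div_two_sub]
  have hsa : 0 < Real.sin a :=
    Real.sin_pos_of_pos_of_lt_pi ha0 (by nlinarith)
  have hsab : Real.sin a < Real.sin (a + b) :=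
    Real.sin_lt_sin_of_lt_of_le_pi_div_two (by nlinarith) (by nlinarith) (by linarith)
  have hsab0 : 0 < Real.sin (a + b) := lt_trans hsa hsab
  have hq0 : 0 < Real.sin a / Real.sin (a + b) := div_pos hsa hsab0
  have hq1 : Real.sin a / Real.sin (a + b) < 1 := (div_lt_one hsab0).mpr hsab
  have hsig : sigma' (kseq n) (gseq n) = Real.sqrt (Real.sin a / Real.sin (a + b)) := by
    unfold sigma'; rw [cos1, cos2]
  have hsq : (sigma' (kseq n) (gseq n)) ^ 2 = Real.sin a / Real.sin (a + b) := by
    rw [hsig]; exact Real.sq_sqrt hq0.le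
  refine ⟨by rw [hsig]; exact Real.sqrt_pos.mpr hq0, ?_, ?_⟩
  · rw [hsig]
    calc Real.sqrt (Real.sin a / Real.sin (a + b)) < Real.sqrt 1 :=
          Real.sqrt_lt_sqrt hq0.le (by simpa using hq1)
      _ = 1 := Real.sqrt_one
  · rw [hsq]
    have hdiff : Real.sin (a + b) - Real.sin a ≤ b := by
      rw [Real.sin_sub_sin]
      have e1 : (a + b - a) / 2 = b / 2 := by ring
      rw [e1]
      have h1 : Real.sin (b / 2) ≤ b / 2 := Real.sin_le (by linarith)
      have h2 : Real.cos ((a + b + a) / 2) ≤ 1 := Real.cos_le_one _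
      have h3 : 0 ≤ Real.sin (b / 2) :=
        Real.sin_nonneg_of_nonneg_of_le_pi (by linarith) (by linarith)
      have h4 : Real.sin (b / 2) * Real.cos ((a + b + a) / 2) ≤ Real.sin (b / 2) * 1 :=
        mul_le_mul_of_nonneg_left h2 h3
      nlinarith [h1, h4]
    have ha2 : a ^ 2 ≤ 0.24 := by nlinarith
    have hlow : 0.94 * a ≤ Real.sin a := by
      have hc := Real.sin_gt_sub_cube ha0
      have : a ^ 3 / 4 ≤ 0.06 * a := by linarith [mul_le_mul_of_nonneg_left ha2 ha0.le]
      linarith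
    have h4s : 4 / s ≤ Real.sin (a + b) := by
      have h188 : (4:ℝ) ≤ 1.88 * π := by nlinarith
      have : 4 / s ≤ (1.88 * π) / s := by gcongr
      have e2 : (1.88 * π) / s = 0.94 * a := by rw [ha_def]; ring
      linarith [hsab.le, e2 ▸ this, hlow]
    have hkey : 1 - Real.sin a / Real.sin (a + b) ≤ b * s / 4 := by
      have e3 : 1 - Real.sin a / Real.sin (a + b)
          = (Real.sin (a + b) - Real.sin a) / Real.sin (a + b) := by
        field_simp
      rw [e3, div_le_iff₀ hsab0]
      calc Real.sin (a + b) - Real.sin a ≤ b := hdiff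
        _ = (b * s / 4) * (4 / s) := by field_simp
        _ ≤ (b * s / 4) * Real.sin (a + b) := by
            apply mul_le_mul_of_nonneg_left h4s; positivity
    have e4 : b * s / 4 = (π / 2) * (1 / s) := by
      rw [hb_def, ← hss]; field_simp; ring
    linarith [e4 ▸ hkey]


lemma sqrt_kseq (n : ℕ) : Real.sqrt (kseq n) = 10 * Real.sqrt 2 ^ n := by
  unfold kseq
  push_cast
  rw [Real.sqrt_mul (by norm_num : (0:ℝ) ≤ 100), show (100:ℝ) = 10 ^ 2 by norm_num,
    Real.sqrt_sq (by norm_num : (0:ℝ) ≤ 10)]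
  congr 1
  induction n with
  | zero => simp
  | succ m ih => rw [pow_succ, pow_succ, ← ih, ← Real.sqrt_mul (by positivity)]

lemma prodIccEq (m : ℕ) :
    ∏ n ∈ Finset.Icc 1 m, sigma' (kseq n) (gseq n)
      = ∏ i ∈ Finset.range m, sigma' (kseq (i + 1)) (gseq (i + 1)) := by
  induction m with
  | zero => simp
  | succ m ih =>
    rw [Finset.prod_Icc_succ_top (by omega), ih, Finset.prod_range_succ]

lemma part3 :
    (∃ L : ℝ, L ∈ Set.Ioo (0 : ℝ) 1 ∧
      Tendsto (fun m : ℕ => ∏ n ∈ Finset.Icc 1 m, sigma' (kseq n) (gseq n))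
        atTop (nhds L)) := by
  have hpiu : π < 3.15 := Real.pi_lt_d2
  have hpil : (3.14:ℝ) < π := Real.pi_gt_d2
  have hr0 : (0:ℝ) ≤ (Real.sqrt 2)⁻¹ := by positivity
  have hs2 : (1:ℝ) < Real.sqrt 2 := by
    rw [show (1:ℝ) = Real.sqrt 1 by simp]
    exact Real.sqrt_lt_sqrt (by norm_num) (by norm_num)
  have hr1 : (Real.sqrt 2)⁻¹ < 1 := inv_lt_one_of_one_lt₀ hs2
  set h : ℕ → ℝ := fun i => Real.log (sigma' (kseq (i + 1)) (gseq (i + 1))) with hh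
  -- bound each term
  have hbound : ∀ i : ℕ, 0 ≤ -h i ∧ -h i ≤ (π / 10) * (Real.sqrt 2)⁻¹ ^ (i + 1) := by
    intro i
    obtain ⟨hpos, hlt1, hub⟩ := key (i + 1) (by omega)
    set σ := sigma' (kseq (i + 1)) (gseq (i + 1))
    have hε : (π / 2) * (1 / Real.sqrt (kseq (i + 1)))
        = (π / 20) * (Real.sqrt 2)⁻¹ ^ (i + 1) := by
      rw [sqrt_kseq]
      rw [one_div, mul_inv, inv_pow]
      ring
    have hεub : (π / 20) * (Real.sqrt 2)⁻¹ ^ (i + 1) ≤ 0.12 := by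
      have h1 : (Real.sqrt 2)⁻¹ ^ (i + 1) ≤ (Real.sqrt 2)⁻¹ ^ 1 :=
        pow_le_pow_of_le_one hr0 hr1.le (by omega)
      have h14 : (1.41:ℝ) ≤ Real.sqrt 2 := by
        rw [Real.le_sqrt (by norm_num) (by norm_num)]; norm_num
      have h2' : (Real.sqrt 2)⁻¹ ≤ 0.71 := by
        rw [inv_le_comm₀ (by positivity) (by norm_num)]
        linarith
      have h1' : (Real.sqrt 2)⁻¹ ^ (i + 1) ≤ 0.71 := by
        rw [pow_one] at h1; linarith
      have h3 : 0 ≤ (Real.sqrt 2)⁻¹ ^ (i+1) := by positivity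
      nlinarith [mul_le_mul hpiu.le h1' h3 (by norm_num : (0:ℝ) ≤ 3.15)]
    have hσ2 : σ ^ 2 ≤ σ := by nlinarith
    have hσlb : 1 - (π / 20) * (Real.sqrt 2)⁻¹ ^ (i + 1) ≤ σ := by
      rw [hε] at hub; nlinarith
    have hσ88 : (0.88:ℝ) ≤ σ := by linarith
    have hlog : -Real.log σ ≤ (1 - σ) / σ := by
      have := Real.log_le_sub_one_of_pos (x := σ⁻¹) (by positivity)
      rw [Real.log_inv] at this
      have e : σ⁻¹ - 1 = (1 - σ) / σ := by field_simp
      linarith [e ▸ this]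
    constructor
    · simp only [hh, neg_nonneg]
      exact Real.log_nonpos hpos.le hlt1.le
    · have h1σ : 1 - σ ≤ (π / 20) * (Real.sqrt 2)⁻¹ ^ (i + 1) := by linarith
      have hd : (1 - σ) / σ ≤ (1 - σ) / 0.88 := by
        apply div_le_div_of_nonneg_left (by linarith) (by norm_num) hσ88
      have : (1 - σ) / 0.88 ≤ (π / 10) * (Real.sqrt 2)⁻¹ ^ (i + 1) := by
        rw [div_le_iff₀ (by norm_num : (0:ℝ) < 0.88)]
        have h3 : 0 ≤ (Real.sqrt 2)⁻¹ ^ (i+1) := by positivity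
        nlinarith
      calc -h i ≤ (1 - σ) / σ := hlog
        _ ≤ (1 - σ) / 0.88 := hd
        _ ≤ _ := this
  have hsumg : Summable (fun i : ℕ => (π / 10) * (Real.sqrt 2)⁻¹ ^ (i + 1)) := by
    have : Summable (fun i : ℕ => (Real.sqrt 2)⁻¹ ^ i) :=
      summable_geometric_of_lt_one hr0 hr1
    simpa [pow_succ, mul_comm, mul_left_comm, mul_assoc] using
      (this.mul_left ((π / 10) * (Real.sqrt 2)⁻¹))
  have hsumng : Summable (fun i : ℕ => -h i) :=
    hsumg.of_nonneg_of_le (fun i => (hbound i).1) (fun i => (hbound i).2)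
  have hsumh : Summable h := by
    have := hsumng.neg
    simpa using this
  refine ⟨Real.exp (∑' i, h i), ⟨Real.exp_pos _, ?_⟩, ?_⟩
  · -- limit < 1
    rw [Real.exp_lt_one_iff]
    have h0 : h 0 < 0 := by
      obtain ⟨hpos, hlt1, -⟩ := key 1 (by omega)
      exact Real.log_neg hpos hlt1
    have htail : ∑' i, h (i + 1) ≤ 0 :=
      tsum_nonpos (fun i => by
        have := (hbound (i + 1)).1; linarith)
    rw [hsumh.tsum_eq_zero_add]
    linarith
  · have hlim : Tendsto (fun m : ℕ => ∑ i ∈ Finset.range m, h i) atTop (nhds (∑' i, h i)) :=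
      hsumh.hasSum.tendsto_sum_nat
    have := (Real.continuous_exp.tendsto _).comp hlim
    apply this.congr
    intro m
    simp only [Function.comp]
    rw [prodIccEq, Real.exp_sum]
    apply Finset.prod_congr rfl
    intro i _
    exact Real.exp_log (key (i + 1) (by omega)).1

theorem stmt_18 :
    (∀ n : ℕ, 1 ≤ n → 0 < sigma' (kseq n) (gseq n) ∧ sigma' (kseq n) (gseq n) < 1) ∧
    (∀ n : ℕ, 1 ≤ n →
      0 ≤ 1 - (sigma' (kseq n) (gseq n)) ^ 2 ∧
      1 - (sigma' (kseq n) (gseq n)) ^ 2 ≤ (π / 2) * (1 / Real.sqrt (kseq n))) ∧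
    (∃ L : ℝ, L ∈ Set.Ioo (0 : ℝ) 1 ∧
      Tendsto (fun m : ℕ => ∏ n ∈ Finset.Icc 1 m, sigma' (kseq n) (gseq n))
        atTop (nhds L)) := by
  refine ⟨fun n hn => ⟨(key n hn).1, (key n hn).2.1⟩, fun n hn => ⟨?_, (key n hn).2.2⟩, part3⟩
  obtain ⟨h0, h1, -⟩ := key n hn
  nlinarith
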